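/- For positive integer k and nonnegative integer t ≤ k, the array P indexed by t-subsets T of [0,k) (rows) and elements j ∈ [0,k) (columns), with P(T,j) = f(T ∪ {j}) if j ∉ T and P(T,j) = * otherwise, where f is any fixed bijection from (t+1)-subsets of [0,k) to [0, C(k,t+1)), is a (k, C(k,t), C(k−1,t−1), C(k,t+1)) PDA. -/

import Mathlib

/-- A `(K, F, Z, S)` placement delivery array with rows indexed by `ι` and columns
indexed by `κ` (star encoded as `none`): `ι` has cardinality `F`, `κ` has
cardinality `K`, each column contains exactly `Z` stars, every integer in `[0,S)`
appears, and any two equal integer entries lie in distinct rows and distinct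
columns with stars at the two crossing positions. -/
def IsPDAOn {ι κ : Type*} [Fintype ι] [Fintype κ] (K F Z S : ℕ)
    (P : ι → κ → Option ℕ) : Prop :=
  Fintype.card ι = F ∧ Fintype.card κ = K ∧
  (∀ j, (Finset.univ.filter fun i => P i j = none).card = Z) ∧
  (∀ i j s, P i j = some s → s < S) ∧
  (∀ s, s < S → ∃ i j, P i j = some s) ∧
  (∀ i₁ j₁ i₂ j₂ s, P i₁ j₁ = some s → P i₂ j₂ = some s → (i₁ ≠ i₂ ∨ j₁ ≠ j₂) →
    i₁ ≠ i₂ ∧ j₁ ≠ j₂ ∧ P i₁ j₂ = none ∧ P i₂ j₁ = none)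

/-- the AN array, with rows indexed by t-subsets T of [0,k) and
columns by j ∈ [0,k), entry f(T ∪ {j}) if j ∉ T and * otherwise (f any bijection
from (t+1)-subsets to [0, C(k,t+1))), is a (k, C(k,t), C(k−1,t−1), C(k,t+1)) PDA
(with the convention C(k−1,−1) = 0). -/
theorem stmt9 (k t : ℕ) (hk : 0 < k) (ht : t ≤ k)
    (f : {A : Finset (Fin k) // A.card = t + 1} ≃ Fin (Nat.choose k (t + 1))) :
    IsPDAOn k (Nat.choose k t)
      (if t = 0 then 0 else Nat.choose (k - 1) (t - 1)) (Nat.choose k (t + 1))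
      (fun (T : {T : Finset (Fin k) // T.card = t}) (j : Fin k) =>
        if h : j ∈ T.1 then none
        else some (f ⟨insert j T.1, by
          rw [Finset.card_insert_of_notMem h, T.2]⟩ : Fin (Nat.choose k (t + 1)))) := by
  refine ⟨by simp [Fintype.card_finset_len], by simp, ?_, ?_, ?_, ?_⟩
  · intro j
    have hcond : ∀ T : {T : Finset (Fin k) // T.card = t},
        ((if h : j ∈ T.1 then none
          else some ((f ⟨insert j T.1, by
            rw [Finset.card_insert_of_notMem h, T.2]⟩ : Fin (Nat.choose k (t + 1))) : ℕ))
          = none) ↔ j ∈ T.1 := by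
      intro T; split <;> simp_all
    rcases Nat.eq_zero_or_pos t with rfl | htpos
    · rw [if_pos rfl, Finset.card_eq_zero, Finset.filter_eq_empty_iff]
      intro T _
      rw [hcond]
      have hT : T.1 = ∅ := Finset.card_eq_zero.mp T.2
      simp [hT]
    · rw [if_neg (by omega)]
      have hfil : (Finset.univ.filter fun T : {T : Finset (Fin k) // T.card = t} =>
          (if h : j ∈ T.1 then none
            else some ((f ⟨insert j T.1, by
              rw [Finset.card_insert_of_notMem h, T.2]⟩ : Fin (Nat.choose k (t + 1))) : ℕ))
            = none)
          = (Finset.univ.filter fun T : {T : Finset (Fin k) // T.card = t} => j ∈ T.1) := by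
        apply Finset.filter_congr
        intro T _
        exact hcond T
      rw [hfil]
      have key : (Finset.univ.filter fun T : {T : Finset (Fin k) // T.card = t} =>
          j ∈ T.1).card = ((Finset.univ.erase j).powersetCard (t - 1)).card := by
        refine Finset.card_bij' (fun T _ => T.1.erase j)
          (fun A hA => ⟨insert j A, ?_⟩) ?_ ?_ ?_ ?_
        · simp only [Finset.mem_powersetCard] at hA
          rw [Finset.card_insert_of_notMem, hA.2]
          · omega
          · intro hj; exact (Finset.notMem_erase j _) (hA.1 hj)
        · intro T hT
          simp only [Finset.mem_filter, Finset.mem_univ, true_and] at hT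
          simp only [Finset.mem_powersetCard]
          constructor
          · intro x hx
            simp only [Finset.mem_erase] at hx ⊢
            exact ⟨hx.1, Finset.mem_univ x⟩
          · rw [Finset.card_erase_of_mem hT, T.2]
        · intro A hA
          simp only [Finset.mem_filter, Finset.mem_univ, true_and]
          exact Finset.mem_insert_self j A
        · intro T hT
          simp only [Finset.mem_filter, Finset.mem_univ, true_and] at hT
          exact Subtype.ext (Finset.insert_erase hT)
        · intro A hA
          simp only [Finset.mem_powersetCard] at hA
          exact Finset.erase_insert (fun hj => (Finset.notMem_erase j _) (hA.1 hj))
      rw [key, Finset.card_powersetCard, Finset.card_erase_of_mem (Finset.mem_univ j),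
        Finset.card_univ, Fintype.card_fin]
  · intro T j s h
    by_cases hj : j ∈ T.1
    · simp only [dif_pos hj] at h
      exact (Option.some_ne_none s h.symm).elim
    · simp only [dif_neg hj, Option.some.injEq] at h
      exact h ▸ (f _).isLt
  · intro s hs
    set A := f.symm ⟨s, hs⟩ with hA
    have hcard : A.1.card = t + 1 := A.2
    have hne : A.1.Nonempty := Finset.card_pos.mp (by omega)
    obtain ⟨j, hj⟩ := hne
    refine ⟨⟨A.1.erase j, by rw [Finset.card_erase_of_mem hj, hcard]; omega⟩, j, ?_⟩
    have hkey : ∀ (h : (insert j ((A.1.erase j))).card = t + 1),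
        f ⟨insert j (A.1.erase j), h⟩ = ⟨s, hs⟩ := by
      intro h
      rw [show (⟨insert j (A.1.erase j), h⟩ : {B : Finset (Fin k) // B.card = t + 1}) = A from
        Subtype.ext (Finset.insert_erase hj), hA, Equiv.apply_symm_apply]
    simp only [dif_neg (Finset.notMem_erase j _), hkey, Option.some.injEq]
  · intro T₁ j₁ T₂ j₂ s h₁ h₂ hne
    rw [dite_eq_iff] at h₁ h₂
    rcases h₁ with ⟨_, h₁⟩ | ⟨hn₁, h₁⟩
    · exact absurd h₁ (by simp)
    rcases h₂ with ⟨_, h₂⟩ | ⟨hn₂, h₂⟩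
    · exact absurd h₂ (by simp)
    simp only [Option.some.injEq] at h₁ h₂
    have hff : f ⟨insert j₁ T₁.1, by rw [Finset.card_insert_of_notMem hn₁, T₁.2]⟩
        = f ⟨insert j₂ T₂.1, by rw [Finset.card_insert_of_notMem hn₂, T₂.2]⟩ :=
      Fin.val_injective (h₁.trans h₂.symm)
    have hins : insert j₁ T₁.1 = insert j₂ T₂.1 :=
      congrArg Subtype.val (f.injective hff)
    have hjne : j₁ ≠ j₂ := by
      rintro rfl
      have : T₁.1 = T₂.1 := by
        rw [← Finset.erase_insert hn₁, ← Finset.erase_insert hn₂, hins]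
      exact hne.elim (fun h => h (Subtype.ext this)) (fun h => h rfl)
    have hj₂T₁ : j₂ ∈ T₁.1 := by
      have : j₂ ∈ insert j₁ T₁.1 := hins ▸ Finset.mem_insert_self j₂ T₂.1
      rcases Finset.mem_insert.mp this with h | h
      · exact absurd h.symm hjne
      · exact h
    have hj₁T₂ : j₁ ∈ T₂.1 := by
      have : j₁ ∈ insert j₂ T₂.1 := hins ▸ Finset.mem_insert_self j₁ T₁.1
      rcases Finset.mem_insert.mp this with h | h
      · exact absurd h hjne
      · exact h
    have hTne : T₁ ≠ T₂ := by
      rintro rfl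
      exact hn₁ hj₁T₂
    exact ⟨hTne, hjne, dif_pos hj₂T₁, dif_pos hj₁T₂⟩
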